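/- For every real p with φ < p ≤ 1, the probability that Player 1 wins the random game of depth n tends to 1: lim_{n→∞} μ_{n,p}({a : V_n(a) = true}) = 1. -/
import Mathlib


open Filter Topology

/-- The golden ratio `φ = (√5 − 1)/2`. -/
noncomputable def phi : ℝ := (Real.sqrt 5 - 1) / 2

/-- Backward-induction value of the win-lose game of depth `n` on the complete binary tree:
`V_0(a) = a 0`; for `n ≥ 1`, the value is the `AND` of the values of the two depth-`(n−1)`
subtrees if `n` is odd (Player 2, the minimizer, moves) and the `OR` if `n` is even
(Player 1, the maximizer, moves).  Player 2 moves last. -/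
def gameValue : (n : ℕ) → (Fin (2 ^ n) → Bool) → Bool
  | 0, a => a 0
  | n + 1, a =>
      have h : 2 ^ (n + 1) = 2 ^ n + 2 ^ n := by rw [pow_succ]; omega
      let aL : Fin (2 ^ n) → Bool := fun i => a ⟨i.1, by have := i.2; omega⟩
      let aR : Fin (2 ^ n) → Bool := fun i => a ⟨i.1 + 2 ^ n, by have := i.2; omega⟩
      if (n + 1) % 2 = 1 then gameValue n aL && gameValue n aR
      else gameValue n aL || gameValue n aR

/-- `μ_{n,p}(S)`: the probability of a set `S` of depth-`n` games when the `2^n` payoffs are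
i.i.d. Bernoulli, each `true` with probability `p`. -/
noncomputable def prob (n : ℕ) (p : ℝ) (S : Set (Fin (2 ^ n) → Bool)) : ℝ :=
  ∑ a : Fin (2 ^ n) → Bool, S.indicator (fun a => ∏ i, if a i then p else 1 - p) a

noncomputable def W (n : ℕ) (p : ℝ) (a : Fin (2 ^ n) → Bool) : ℝ :=
  ∏ i, if a i then p else 1 - p

def splitEquiv (n : ℕ) :
    (Fin (2 ^ (n + 1)) → Bool) ≃ (Fin (2 ^ n) → Bool) × (Fin (2 ^ n) → Bool) where
  toFun a := (fun i => a ⟨i.1, by have := i.2; have h := pow_succ 2 n; omega⟩,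
              fun i => a ⟨i.1 + 2 ^ n, by have := i.2; have h := pow_succ 2 n; omega⟩)
  invFun bc i := if h : i.1 < 2 ^ n then bc.1 ⟨i.1, h⟩
    else bc.2 ⟨i.1 - 2 ^ n, by have := i.2; have h2 := pow_succ 2 n; omega⟩
  left_inv a := by
    funext i
    dsimp only
    split
    · rfl
    · congr 1
      exact Fin.ext (by simp; omega)
  right_inv bc := by
    ext i
    · dsimp only
      rw [dif_pos i.2]
    · dsimp only
      rw [dif_neg (by omega)]
      exact congrArg bc.2 (Fin.ext (by simp))

lemma sum_split (n : ℕ) (G : (Fin (2 ^ n) → Bool) → (Fin (2 ^ n) → Bool) → ℝ) :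
    ∑ a : Fin (2 ^ (n + 1)) → Bool,
      G (fun i => a ⟨i.1, by have := i.2; have h := pow_succ 2 n; omega⟩)
        (fun i => a ⟨i.1 + 2 ^ n, by have := i.2; have h := pow_succ 2 n; omega⟩)
      = ∑ b : Fin (2 ^ n) → Bool, ∑ c : Fin (2 ^ n) → Bool, G b c := by
  trans ∑ x : (Fin (2 ^ n) → Bool) × (Fin (2 ^ n) → Bool), G x.1 x.2
  · exact Fintype.sum_equiv (splitEquiv n) _ _ (fun a => rfl)
  · exact Fintype.sum_prod_type _

lemma W_split (n : ℕ) (p : ℝ) (a : Fin (2 ^ (n + 1)) → Bool) :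
    W (n + 1) p a
      = W n p (fun i => a ⟨i.1, by have := i.2; have h := pow_succ 2 n; omega⟩)
        * W n p (fun i => a ⟨i.1 + 2 ^ n, by have := i.2; have h := pow_succ 2 n; omega⟩) := by
  classical
  have hN : 2 ^ (n + 1) = 2 ^ n + 2 ^ n := by have h := pow_succ 2 n; omega
  set g : ℕ → ℝ := fun j => if h : j < 2 ^ (n + 1) then (if a ⟨j, h⟩ then p else 1 - p) else 1
    with hg
  have h1 : W (n + 1) p a = ∏ j ∈ Finset.range (2 ^ n + 2 ^ n), g j := by
    rw [← hN, ← Fin.prod_univ_eq_prod_range g (2 ^ (n + 1))]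
    refine Finset.prod_congr rfl fun i _ => ?_
    rw [hg]
    simp only [dif_pos i.2]
  have h2 : (∏ j ∈ Finset.range (2 ^ n), g j)
      = W n p (fun i => a ⟨i.1, by have := i.2; omega⟩) := by
    rw [← Fin.prod_univ_eq_prod_range (fun j => g j) (2 ^ n)]
    refine Finset.prod_congr rfl fun i _ => ?_
    rw [hg]
    have hi : (i : ℕ) < 2 ^ (n + 1) := by have := i.2; omega
    simp only [dif_pos hi]
  have h3 : (∏ j ∈ Finset.range (2 ^ n), g (2 ^ n + j))
      = W n p (fun i => a ⟨i.1 + 2 ^ n, by have := i.2; omega⟩) := by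
    rw [← Fin.prod_univ_eq_prod_range (fun j => g (2 ^ n + j)) (2 ^ n)]
    refine Finset.prod_congr rfl fun i _ => ?_
    rw [hg]
    have hi : 2 ^ n + (i : ℕ) < 2 ^ (n + 1) := by have := i.2; omega
    simp only [dif_pos hi]
    have he : (⟨2 ^ n + (i : ℕ), hi⟩ : Fin (2 ^ (n + 1)))
        = ⟨(i : ℕ) + 2 ^ n, by have := i.2; omega⟩ := Fin.ext (Nat.add_comm _ _)
    rw [he]
  rw [h1, Finset.prod_range_add, h2, h3]

lemma W_sum (n : ℕ) (p : ℝ) : ∑ a : Fin (2 ^ n) → Bool, W n p a = 1 := by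
  induction n with
  | zero =>
      let e : (Fin (2 ^ 0) → Bool) ≃ Bool :=
        ⟨fun a => a 0, fun b _ => b, fun a => funext fun i => congrArg a (Fin.ext (by omega)),
          fun b => rfl⟩
      rw [Fintype.sum_equiv e _ (fun b : Bool => if b = true then p else 1 - p) (fun a => ?_)]
      · simp
      · have hw : W 0 p a = if a 0 = true then p else 1 - p :=
          Fin.prod_univ_one (fun i : Fin 1 => if a i then p else 1 - p)
        exact hw
  | succ n ih =>
      have := sum_split n (fun b c => W n p b * W n p c)
      calc ∑ a : Fin (2 ^ (n + 1)) → Bool, W (n + 1) p a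
          = ∑ a : Fin (2 ^ (n + 1)) → Bool,
              W n p (fun i => a ⟨i.1, by have := i.2; have h := pow_succ 2 n; omega⟩)
                * W n p (fun i => a ⟨i.1 + 2 ^ n, by have := i.2; have h := pow_succ 2 n; omega⟩) :=
            Finset.sum_congr rfl fun a _ => W_split n p a
        _ = ∑ b : Fin (2 ^ n) → Bool, ∑ c : Fin (2 ^ n) → Bool, W n p b * W n p c := this
        _ = 1 := by
            rw [← Finset.sum_mul_sum]
            rw [ih]; norm_num

noncomputable def qseq (p : ℝ) : ℕ → ℝ
  | 0 => p
  | n + 1 => if (n + 1) % 2 = 1 then qseq p n ^ 2 else 1 - (1 - qseq p n) ^ 2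

lemma gameValue_succ (n : ℕ) (a : Fin (2 ^ (n + 1)) → Bool) :
    gameValue (n + 1) a =
      if (n + 1) % 2 = 1 then
        gameValue n (fun i => a ⟨i.1, by have := i.2; have h := pow_succ 2 n; omega⟩)
          && gameValue n (fun i => a ⟨i.1 + 2 ^ n, by have := i.2; have h := pow_succ 2 n; omega⟩)
      else
        gameValue n (fun i => a ⟨i.1, by have := i.2; have h := pow_succ 2 n; omega⟩)
          || gameValue n (fun i => a ⟨i.1 + 2 ^ n, by have := i.2; have h := pow_succ 2 n; omega⟩) := rfl

lemma T_succ (n : ℕ) (p : ℝ) :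
    (∑ a : Fin (2 ^ (n + 1)) → Bool, if gameValue (n + 1) a = true then W (n + 1) p a else 0)
      = if (n + 1) % 2 = 1 then
          (∑ a : Fin (2 ^ n) → Bool, if gameValue n a = true then W n p a else 0) ^ 2
        else
          1 - (1 - ∑ a : Fin (2 ^ n) → Bool, if gameValue n a = true then W n p a else 0) ^ 2 := by
  classical
  set T := ∑ a : Fin (2 ^ n) → Bool, if gameValue n a = true then W n p a else 0 with hT
  set F := ∑ a : Fin (2 ^ n) → Bool, if gameValue n a = false then W n p a else 0 with hF
  have hTF : T + F = 1 := by
    rw [hT, hF, ← Finset.sum_add_distrib, ← W_sum n p]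
    refine Finset.sum_congr rfl fun a _ => ?_
    cases h : gameValue n a <;> simp [h]
  by_cases hpar : (n + 1) % 2 = 1
  · rw [if_pos hpar]
    have key : ∀ a : Fin (2 ^ (n + 1)) → Bool,
        (if gameValue (n + 1) a = true then W (n + 1) p a else 0)
          = (if gameValue n (fun i => a ⟨i.1, by have := i.2; have h := pow_succ 2 n; omega⟩) = true
              then W n p (fun i => a ⟨i.1, by have := i.2; have h := pow_succ 2 n; omega⟩) else 0)
            * (if gameValue n (fun i => a ⟨i.1 + 2 ^ n, by have := i.2; have h := pow_succ 2 n; omega⟩) = true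
              then W n p (fun i => a ⟨i.1 + 2 ^ n, by have := i.2; have h := pow_succ 2 n; omega⟩) else 0) := by
      intro a
      rw [gameValue_succ, if_pos hpar, W_split]
      cases gameValue n (fun i => a ⟨i.1, by have := i.2; have h := pow_succ 2 n; omega⟩) <;>
        cases gameValue n (fun i => a ⟨i.1 + 2 ^ n, by have := i.2; have h := pow_succ 2 n; omega⟩) <;>
        simp
    calc (∑ a : Fin (2 ^ (n + 1)) → Bool, if gameValue (n + 1) a = true then W (n + 1) p a else 0)
        = ∑ b : Fin (2 ^ n) → Bool, ∑ c : Fin (2 ^ n) → Bool,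
            (if gameValue n b = true then W n p b else 0)
              * (if gameValue n c = true then W n p c else 0) :=
          (Finset.sum_congr rfl fun a _ => key a).trans
            (sum_split n (fun b c => (if gameValue n b = true then W n p b else 0)
              * (if gameValue n c = true then W n p c else 0)))
      _ = T * T := by rw [hT, Finset.sum_mul_sum]
      _ = T ^ 2 := (sq T).symm
  · rw [if_neg hpar]
    have key : ∀ a : Fin (2 ^ (n + 1)) → Bool,
        (if gameValue (n + 1) a = true then W (n + 1) p a else 0)
          = W (n + 1) p a
            - (if gameValue n (fun i => a ⟨i.1, by have := i.2; have h := pow_succ 2 n; omega⟩) = false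
              then W n p (fun i => a ⟨i.1, by have := i.2; have h := pow_succ 2 n; omega⟩) else 0)
            * (if gameValue n (fun i => a ⟨i.1 + 2 ^ n, by have := i.2; have h := pow_succ 2 n; omega⟩) = false
              then W n p (fun i => a ⟨i.1 + 2 ^ n, by have := i.2; have h := pow_succ 2 n; omega⟩) else 0) := by
      intro a
      rw [gameValue_succ, if_neg hpar]
      rw [show W (n + 1) p a = _ from W_split n p a]
      cases gameValue n (fun i => a ⟨i.1, by have := i.2; have h := pow_succ 2 n; omega⟩) <;>
        cases gameValue n (fun i => a ⟨i.1 + 2 ^ n, by have := i.2; have h := pow_succ 2 n; omega⟩) <;>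
        simp
    have hsub : (∑ a : Fin (2 ^ (n + 1)) → Bool, if gameValue (n + 1) a = true then W (n + 1) p a else 0)
        = (∑ a : Fin (2 ^ (n + 1)) → Bool, W (n + 1) p a)
          - ∑ a : Fin (2 ^ (n + 1)) → Bool,
            (if gameValue n (fun i => a ⟨i.1, by have := i.2; have h := pow_succ 2 n; omega⟩) = false
              then W n p (fun i => a ⟨i.1, by have := i.2; have h := pow_succ 2 n; omega⟩) else 0)
            * (if gameValue n (fun i => a ⟨i.1 + 2 ^ n, by have := i.2; have h := pow_succ 2 n; omega⟩) = false
              then W n p (fun i => a ⟨i.1 + 2 ^ n, by have := i.2; have h := pow_succ 2 n; omega⟩) else 0) := by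
      rw [← Finset.sum_sub_distrib]
      exact Finset.sum_congr rfl fun a _ => key a
    rw [hsub, W_sum,
      sum_split n (fun b c => (if gameValue n b = false then W n p b else 0)
        * (if gameValue n c = false then W n p c else 0)),
      ← Finset.sum_mul_sum, ← hF]
    have hF1 : F = 1 - T := by linarith
    rw [hF1]; ring

lemma prob_eq (n : ℕ) (p : ℝ) :
    prob n p {a | gameValue n a = true}
      = ∑ a : Fin (2 ^ n) → Bool, if gameValue n a = true then W n p a else 0 := by
  classical
  unfold prob
  refine Finset.sum_congr rfl fun a _ => ?_
  by_cases h : gameValue n a = true <;> simp [Set.indicator_apply, h, W]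

lemma T_eq (p : ℝ) (n : ℕ) :
    (∑ a : Fin (2 ^ n) → Bool, if gameValue n a = true then W n p a else 0) = qseq p n := by
  induction n with
  | zero =>
      let e : (Fin (2 ^ 0) → Bool) ≃ Bool :=
        ⟨fun a => a 0, fun b _ => b, fun a => funext fun i => congrArg a (Fin.ext (by omega)),
          fun b => rfl⟩
      rw [Fintype.sum_equiv e _ (fun b : Bool => if b = true then p else 0) (fun a => ?_)]
      · simp [qseq]
      · have hg : gameValue 0 a = a 0 := rfl
        have hw : W 0 p a = if a 0 = true then p else 1 - p :=
          Fin.prod_univ_one (fun i : Fin 1 => if a i then p else 1 - p)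
        show (if gameValue 0 a = true then W 0 p a else 0) = if a 0 = true then p else 0
        rw [hg, hw]
        by_cases h : a 0 = true <;> simp [h]
  | succ n ih =>
      rw [T_succ, ih]
      rfl

lemma phi_sq : phi ^ 2 = 1 - phi := by
  have h5 : Real.sqrt 5 ^ 2 = 5 := Real.sq_sqrt (by norm_num)
  unfold phi; nlinarith [Real.sqrt_nonneg 5]

lemma phi_half : (1 : ℝ) / 2 < phi := by
  have h5 : Real.sqrt 5 ^ 2 = 5 := Real.sq_sqrt (by norm_num)
  unfold phi; nlinarith [Real.sqrt_nonneg 5]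

lemma qseq_mem (p : ℝ) (hp0 : 0 ≤ p) (hp1 : p ≤ 1) (n : ℕ) :
    0 ≤ qseq p n ∧ qseq p n ≤ 1 := by
  induction n with
  | zero => exact ⟨hp0, hp1⟩
  | succ n ih =>
      obtain ⟨h0, h1⟩ := ih
      rw [show qseq p (n + 1)
        = if (n + 1) % 2 = 1 then qseq p n ^ 2 else 1 - (1 - qseq p n) ^ 2 from rfl]
      split_ifs <;> constructor <;> nlinarith

lemma qseq_tendsto (p : ℝ) (hp : phi < p) (hp' : p ≤ 1) :
    Filter.Tendsto (qseq p) Filter.atTop (𝓝 1) := by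
  have hphi2 := phi_sq
  have hhalf := phi_half
  have hphalf : (1 : ℝ) / 2 < p := lt_trans hhalf hp
  have hp0 : 0 ≤ p := by linarith
  set c : ℝ := (1 - p) * (1 + p) ^ 2 with hc
  have hc0 : 0 ≤ c := by nlinarith
  have hc1 : c < 1 := by
    have hA : (0 : ℝ) < p + phi + 1 := by linarith
    have hB : (0 : ℝ) < p := by linarith
    have hC : (0 : ℝ) < (p - phi) * (p + phi + 1) := mul_pos (by linarith) hA
    have hD : (0 : ℝ) < p * ((p - phi) * (p + phi + 1)) := mul_pos hB hC
    nlinarith [hD]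
  have hb : ∀ n, 0 ≤ qseq p n ∧ qseq p n ≤ 1 := qseq_mem p hp0 hp'
  have step1 : ∀ k, qseq p (2 * k + 1) = qseq p (2 * k) ^ 2 := by
    intro k
    rw [show qseq p (2 * k + 1)
      = if (2 * k + 1) % 2 = 1 then qseq p (2 * k) ^ 2 else 1 - (1 - qseq p (2 * k)) ^ 2 from rfl,
      if_pos (by omega)]
  have step2 : ∀ k, qseq p (2 * (k + 1)) = 1 - (1 - qseq p (2 * k + 1)) ^ 2 := by
    intro k
    rw [show 2 * (k + 1) = (2 * k + 1) + 1 from by ring]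
    rw [show qseq p ((2 * k + 1) + 1)
      = if ((2 * k + 1) + 1) % 2 = 1 then qseq p (2 * k + 1) ^ 2
        else 1 - (1 - qseq p (2 * k + 1)) ^ 2 from rfl,
      if_neg (by omega)]
  have hE : ∀ k, 1 - qseq p (2 * k) ≤ (1 - p) * c ^ k := by
    intro k
    induction k with
    | zero =>
        have h : qseq p (2 * 0) = p := rfl
        rw [h, pow_zero, mul_one]
    | succ k ih =>
        obtain ⟨hq0, hq1⟩ := hb (2 * k)
        have hck0 : (0 : ℝ) ≤ c ^ k := pow_nonneg hc0 k
        have hck : c ^ k ≤ 1 := pow_le_one₀ hc0 hc1.le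
        have he1 : 1 - qseq p (2 * k) ≤ 1 - p := le_trans ih (by nlinarith)
        rw [step2 k, step1 k]
        set q := qseq p (2 * k) with hq
        have h3 : 0 ≤ 1 - q := by linarith
        have hb12 : 1 - p ≤ 1 / 2 := by linarith
        have hfac : (0 : ℝ) ≤ 4 - 4 * ((1 - q) + (1 - p))
            + ((1 - q) ^ 2 + (1 - q) * (1 - p) + (1 - p) ^ 2) := by
          nlinarith [sq_nonneg (1 - q), sq_nonneg (1 - p),
            mul_nonneg h3 (show (0 : ℝ) ≤ 1 - p by linarith)]
        have h2 : (1 - q) * (2 - (1 - q)) ^ 2 ≤ c := by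
          rw [hc]
          nlinarith [mul_nonneg (sub_nonneg.2 he1) hfac]
        have key : (1 - q ^ 2) ^ 2 ≤ ((1 - p) * c ^ k) * c := by
          have h1 : (1 - q ^ 2) ^ 2 = (1 - q) * ((1 - q) * (2 - (1 - q)) ^ 2) := by ring
          rw [h1]
          exact mul_le_mul ih h2 (mul_nonneg h3 (sq_nonneg _))
            (mul_nonneg (by linarith) hck0)
        have hps : (1 - p) * c ^ (k + 1) = (1 - p) * c ^ k * c := by
          rw [pow_succ]; ring
        linarith [key, hps.ge, hps.le]
  have hOdd : ∀ k, 1 - qseq p (2 * k + 1) ≤ 2 * ((1 - p) * c ^ k) := by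
    intro k
    obtain ⟨hq0, hq1⟩ := hb (2 * k)
    rw [step1 k]
    nlinarith [hE k]
  have hAll : ∀ n, 1 - qseq p n ≤ 2 * ((1 - p) * c ^ (n / 2)) := by
    intro n
    rcases Nat.even_or_odd n with ⟨k, hk⟩ | ⟨k, hk⟩
    · have h1 : n = 2 * k := by omega
      have h2 : n / 2 = k := by omega
      rw [h2, h1]
      have := hE k
      have h4 : 0 ≤ (1 - p) * c ^ k := mul_nonneg (by linarith) (pow_nonneg hc0 k)
      linarith
    · have h1 : n = 2 * k + 1 := by omega
      have h2 : n / 2 = k := by omega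
      rw [h2, h1]
      exact hOdd k
  have hdiv : Filter.Tendsto (fun n : ℕ => n / 2) Filter.atTop Filter.atTop :=
    Filter.tendsto_atTop_atTop.2 fun b => ⟨2 * b, fun n hn => by omega⟩
  have hpow : Filter.Tendsto (fun n : ℕ => c ^ (n / 2)) Filter.atTop (𝓝 0) :=
    (tendsto_pow_atTop_nhds_zero_of_lt_one hc0 hc1).comp hdiv
  have hlow : Filter.Tendsto (fun n : ℕ => 1 - 2 * ((1 - p) * c ^ (n / 2)))
      Filter.atTop (𝓝 1) := by
    have h := ((hpow.const_mul (1 - p)).const_mul 2).const_sub 1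
    simpa using h
  exact tendsto_of_tendsto_of_tendsto_of_le_of_le hlow tendsto_const_nhds
    (fun n => by linarith [hAll n]) (fun n => (hb n).2)

/-- For every `p` with `φ < p ≤ 1`, the probability that Player 1 wins the depth-`n`
random game tends to `1` as `n → ∞`. -/
theorem player_one_wins_asymptotically (p : ℝ) (hp : phi < p) (hp' : p ≤ 1) :
    Tendsto (fun n => prob n p {a | gameValue n a = true}) atTop (𝓝 1) := by
  have hfun : (fun n => prob n p {a | gameValue n a = true}) = fun n => qseq p n :=
    funext fun n => (prob_eq n p).trans (T_eq p n)
  rw [hfun]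
  exact qseq_tendsto p hp hp'
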